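/- Let G be a graph and let A, B, C be pairwise disjoint subsets of its vertices such that the bipartite graphs induced between A and B and between B and C are both biregular (every vertex of A has the same degree into B, every vertex of B has the same degree into A, and similarly for B and C) and neither is edgeless. If |A| = |C| = m ≤ |B|, then there are m pairwise vertex-disjoint paths from A to C in the subgraph induced on A ∪ B ∪ C. -/

import Mathlib

open SimpleGraph Finset

private lemma dc_aux {V : Type*} [DecidableEq V] (S T : Finset V) (r : V → V → Prop)
    [DecidableRel r] :
    ∑ a ∈ S, (T.filter (fun b => r a b)).card = ∑ b ∈ T, (S.filter (fun a => r a b)).card := by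
  simp_rw [Finset.card_filter]
  exact Finset.sum_comm

private lemma glob_aux {V : Type*} [DecidableEq V] (S T : Finset V) (r : V → V → Prop)
    [DecidableRel r] (d₁ d₂ : ℕ)
    (h1 : ∀ a ∈ S, (T.filter (fun b => r a b)).card = d₁)
    (h2 : ∀ b ∈ T, (S.filter (fun a => r a b)).card = d₂) :
    S.card * d₁ = T.card * d₂ := by
  have key := dc_aux S T r
  rwa [Finset.sum_congr rfl h1, Finset.sum_congr rfl h2, Finset.sum_const, Finset.sum_const,
    smul_eq_mul, smul_eq_mul] at key

private lemma hall_count_aux {V : Type*} [DecidableEq V] (St T S : Finset V) (r : V → V → Prop)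
    [DecidableRel r] (hS : S ⊆ St) (d₁ d₂ : ℕ)
    (h1 : ∀ a ∈ St, (T.filter (fun b => r a b)).card = d₁)
    (h2 : ∀ b ∈ T, (St.filter (fun a => r a b)).card = d₂) :
    S.card * d₁ ≤ (T.filter (fun b => ∃ a ∈ S, r a b)).card * d₂ := by
  calc S.card * d₁ = ∑ a ∈ S, (T.filter (fun b => r a b)).card := by
        rw [Finset.sum_congr rfl (fun a ha => h1 a (hS ha)), Finset.sum_const, smul_eq_mul]
    _ = ∑ b ∈ T, (S.filter (fun a => r a b)).card := dc_aux S T r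
    _ = ∑ b ∈ T.filter (fun b => ∃ a ∈ S, r a b), (S.filter (fun a => r a b)).card := by
        symm
        apply Finset.sum_subset (Finset.filter_subset _ _)
        intro b hbT hbN
        rw [Finset.card_eq_zero, Finset.filter_eq_empty_iff]
        intro a ha hr
        exact hbN (Finset.mem_filter.mpr ⟨hbT, a, ha, hr⟩)
    _ ≤ ∑ b ∈ T.filter (fun b => ∃ a ∈ S, r a b), (St.filter (fun a => r a b)).card :=
        Finset.sum_le_sum fun b _ => Finset.card_le_card (Finset.filter_subset_filter _ hS)
    _ = (T.filter (fun b => ∃ a ∈ S, r a b)).card * d₂ := by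
        rw [Finset.sum_congr rfl (fun b hb => h2 b (Finset.mem_of_mem_filter b hb)),
          Finset.sum_const, smul_eq_mul]

private lemma arith_aux (s t P Q U m n : ℕ) (hmpos : 0 < m) (hmn : m ≤ n)
    (hPU : P ≤ U) (htU : t ≤ U) (h1 : s * n ≤ P * m) (h2 : t * m ≤ Q * n) :
    s + t ≤ U + Q := by
  have hnpos : 0 < n := lt_of_lt_of_le hmpos hmn
  rcases le_or_gt (t * m) (s * n) with h | h
  · have key : (s + t) * (m * n) ≤ (P + Q) * (m * n) := by nlinarith
    have := Nat.le_of_mul_le_mul_right key (Nat.mul_pos hmpos hnpos)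
    omega
  · have hsQ : s * n < Q * n := lt_of_lt_of_le h h2
    have : s < Q := lt_of_mul_lt_mul_right hsQ (Nat.zero_le n)
    omega


/-- If `A`, `B`, `C` are pairwise disjoint vertex sets such that `G[A,B]` and
`G[B,C]` are biregular and not edgeless, and `|A| = |C| = m ≤ |B|`, then there are `m`
pairwise vertex-disjoint paths from `A` to `C` inside `A ∪ B ∪ C`. -/
theorem stmt_0 {V : Type*} [Fintype V] [DecidableEq V] (G : SimpleGraph V)
    [DecidableRel G.Adj] (A B C : Finset V) (m : ℕ)
    (hAB : Disjoint A B) (hAC : Disjoint A C) (hBC : Disjoint B C)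
    (hbiAB : ∃ d₁ d₂ : ℕ, (∀ a ∈ A, (B.filter (fun b => G.Adj a b)).card = d₁) ∧
      (∀ b ∈ B, (A.filter (fun a => G.Adj b a)).card = d₂))
    (hbiBC : ∃ d₁ d₂ : ℕ, (∀ b ∈ B, (C.filter (fun c => G.Adj b c)).card = d₁) ∧
      (∀ c ∈ C, (B.filter (fun b => G.Adj c b)).card = d₂))
    (hABne : ∃ a ∈ A, ∃ b ∈ B, G.Adj a b)
    (hBCne : ∃ b ∈ B, ∃ c ∈ C, G.Adj b c)
    (hA : A.card = m) (hC : C.card = m) (hm : m ≤ B.card) :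
    ∃ (s t : Fin m → V) (p : ∀ i, G.Walk (s i) (t i)),
      (∀ i, s i ∈ A) ∧ (∀ i, t i ∈ C) ∧
      (∀ i, (p i).IsPath) ∧
      (∀ i, ∀ v ∈ (p i).support, v ∈ A ∪ B ∪ C) ∧
      (∀ i j, i ≠ j → ∀ v, v ∈ (p i).support → v ∉ (p j).support) := by
  classical
  obtain ⟨d₁, d₂, hd₁, hd₂⟩ := hbiAB
  obtain ⟨e₁, e₂, he₁, he₂⟩ := hbiBC
  obtain ⟨a₀, ha₀, b₀, hb₀, hab₀⟩ := hABne
  obtain ⟨b₁, hb₁, c₁, hc₁, hbc₁⟩ := hBCne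
  set n := B.card with hn
  have hmpos : 0 < m := hA ▸ Finset.card_pos.mpr ⟨a₀, ha₀⟩
  have hd₂' : ∀ b ∈ B, (A.filter (fun a => G.Adj a b)).card = d₂ := by
    intro b hb
    rw [show A.filter (fun a => G.Adj a b) = A.filter (fun a => G.Adj b a) from
      Finset.filter_congr (fun a _ => by rw [G.adj_comm])]
    exact hd₂ b hb
  have he₂' : ∀ c ∈ C, (B.filter (fun b => G.Adj b c)).card = e₂ := by
    intro c hc
    rw [show B.filter (fun b => G.Adj b c) = B.filter (fun b => G.Adj c b) from
      Finset.filter_congr (fun b _ => by rw [G.adj_comm])]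
    exact he₂ c hc
  have hd₁pos : 0 < d₁ := by
    rw [← hd₁ a₀ ha₀]
    exact Finset.card_pos.mpr ⟨b₀, Finset.mem_filter.mpr ⟨hb₀, hab₀⟩⟩
  have hd₂pos : 0 < d₂ := by
    rw [← hd₂' b₀ hb₀]
    exact Finset.card_pos.mpr ⟨a₀, Finset.mem_filter.mpr ⟨ha₀, hab₀⟩⟩
  have he₁pos : 0 < e₁ := by
    rw [← he₁ b₁ hb₁]
    exact Finset.card_pos.mpr ⟨c₁, Finset.mem_filter.mpr ⟨hc₁, hbc₁⟩⟩
  have he₂pos : 0 < e₂ := by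
    rw [← he₂' c₁ hc₁]
    exact Finset.card_pos.mpr ⟨b₁, Finset.mem_filter.mpr ⟨hb₁, hbc₁⟩⟩
  have hglob1 : m * d₁ = n * d₂ := by
    rw [← hA]
    exact glob_aux A B (fun a b => G.Adj a b) d₁ d₂ hd₁ hd₂'
  have hglob2 : n * e₁ = m * e₂ := by
    rw [← hC]
    exact glob_aux B C (fun b c => G.Adj b c) e₁ e₂ he₁ he₂'
  -- the auxiliary Hall graph
  set t' : V ⊕ V → Finset (V ⊕ V) :=
    Sum.elim
      (fun a => if a ∈ A then (B.filter (fun b => G.Adj a b)).image Sum.inr else Finset.univ)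
      (fun b => if b ∈ B then
        insert (Sum.inr b) ((C.filter (fun c => G.Adj b c)).image Sum.inl) else Finset.univ)
    with ht'
  have hall : ∀ s : Finset (V ⊕ V), s.card ≤ (s.biUnion t').card := by
    intro s
    by_cases hjunk : ∀ x ∈ s, (∃ a ∈ A, x = Sum.inl a) ∨ (∃ b ∈ B, x = Sum.inr b)
    · set SA := A.filter (fun a => Sum.inl a ∈ s) with hSA
      set SB := B.filter (fun b => Sum.inr b ∈ s) with hSB
      have hs : s = SA.image Sum.inl ∪ SB.image Sum.inr := by
        ext x
        constructor
        · intro hx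
          rcases hjunk x hx with ⟨a, ha, rfl⟩ | ⟨b, hb, rfl⟩
          · exact Finset.mem_union_left _ (Finset.mem_image_of_mem _
              (Finset.mem_filter.mpr ⟨ha, hx⟩))
          · exact Finset.mem_union_right _ (Finset.mem_image_of_mem _
              (Finset.mem_filter.mpr ⟨hb, hx⟩))
        · intro hx
          rcases Finset.mem_union.mp hx with hx | hx <;>
          · obtain ⟨y, hy, rfl⟩ := Finset.mem_image.mp hx
            exact (Finset.mem_filter.mp hy).2
      have hscard : s.card = SA.card + SB.card := by
        rw [hs, Finset.card_union_of_disjoint, Finset.card_image_of_injective _ Sum.inl_injective,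
          Finset.card_image_of_injective _ Sum.inr_injective]
        simp [Finset.disjoint_left]
      set NB := B.filter (fun b => ∃ a ∈ SA, G.Adj a b) with hNB
      set NC := C.filter (fun c => ∃ b ∈ SB, G.Adj b c) with hNC
      have hsub : ((NB ∪ SB).image Sum.inr ∪ NC.image Sum.inl) ⊆ s.biUnion t' := by
        intro x hx
        rcases Finset.mem_union.mp hx with hx | hx
        · obtain ⟨b, hb, rfl⟩ := Finset.mem_image.mp hx
          rcases Finset.mem_union.mp hb with hb | hb
          · obtain ⟨hbB, a, haSA, hadj⟩ := Finset.mem_filter.mp hb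
            obtain ⟨haA, has⟩ := Finset.mem_filter.mp haSA
            refine Finset.mem_biUnion.mpr ⟨Sum.inl a, has, ?_⟩
            simp only [ht', Sum.elim_inl, if_pos haA]
            exact Finset.mem_image_of_mem _ (Finset.mem_filter.mpr ⟨hbB, hadj⟩)
          · obtain ⟨hbB, hbs⟩ := Finset.mem_filter.mp hb
            refine Finset.mem_biUnion.mpr ⟨Sum.inr b, hbs, ?_⟩
            simp only [ht', Sum.elim_inr, if_pos hbB]
            exact Finset.mem_insert_self _ _
        · obtain ⟨c, hc, rfl⟩ := Finset.mem_image.mp hx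
          obtain ⟨hcC, b, hbSB, hadj⟩ := Finset.mem_filter.mp hc
          obtain ⟨hbB, hbs⟩ := Finset.mem_filter.mp hbSB
          refine Finset.mem_biUnion.mpr ⟨Sum.inr b, hbs, ?_⟩
          simp only [ht', Sum.elim_inr, if_pos hbB]
          exact Finset.mem_insert_of_mem
            (Finset.mem_image_of_mem _ (Finset.mem_filter.mpr ⟨hcC, hadj⟩))
      have hge : (NB ∪ SB).card + NC.card ≤ (s.biUnion t').card := by
        calc (NB ∪ SB).card + NC.card
            = ((NB ∪ SB).image Sum.inr).card + (NC.image Sum.inl).card := by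
              rw [Finset.card_image_of_injective _ Sum.inr_injective,
                Finset.card_image_of_injective _ Sum.inl_injective]
          _ = ((NB ∪ SB).image Sum.inr ∪ NC.image Sum.inl).card :=
              (Finset.card_union_of_disjoint (by simp [Finset.disjoint_left])).symm
          _ ≤ (s.biUnion t').card := Finset.card_le_card hsub
      have h1 : SA.card * d₁ ≤ NB.card * d₂ :=
        hall_count_aux A B SA (fun a b => G.Adj a b) (Finset.filter_subset _ _) d₁ d₂ hd₁ hd₂'
      have h2 : SB.card * e₁ ≤ NC.card * e₂ :=
        hall_count_aux B C SB (fun b c => G.Adj b c) (Finset.filter_subset _ _) e₁ e₂ he₁ he₂'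
      have h1' : SA.card * n ≤ NB.card * m := by
        have key : (SA.card * n) * d₂ ≤ (NB.card * m) * d₂ := by
          calc (SA.card * n) * d₂ = SA.card * (n * d₂) := by ring
            _ = SA.card * (m * d₁) := by rw [hglob1]
            _ = (SA.card * d₁) * m := by ring
            _ ≤ (NB.card * d₂) * m := Nat.mul_le_mul_right m h1
            _ = (NB.card * m) * d₂ := by ring
        exact Nat.le_of_mul_le_mul_right key hd₂pos
      have h2' : SB.card * m ≤ NC.card * n := by
        have key : (SB.card * m) * e₂ ≤ (NC.card * n) * e₂ := by
          calc (SB.card * m) * e₂ = SB.card * (m * e₂) := by ring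
            _ = SB.card * (n * e₁) := by rw [hglob2]
            _ = (SB.card * e₁) * n := by ring
            _ ≤ (NC.card * e₂) * n := Nat.mul_le_mul_right n h2
            _ = (NC.card * n) * e₂ := by ring
        exact Nat.le_of_mul_le_mul_right key he₂pos
      rw [hscard]
      exact le_trans
        (arith_aux SA.card SB.card NB.card NC.card (NB ∪ SB).card m n hmpos hm
          (Finset.card_le_card Finset.subset_union_left)
          (Finset.card_le_card Finset.subset_union_right) h1' h2') hge
    · push_neg at hjunk
      obtain ⟨x, hxs, hx1, hx2⟩ := hjunk
      have ht'x : t' x = Finset.univ := by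
        rcases x with a | b
        · have : a ∉ A := fun ha => hx1 a ha rfl
          simp [ht', this]
        · have : b ∉ B := fun hb => hx2 b hb rfl
          simp [ht', this]
      calc s.card ≤ (Finset.univ : Finset (V ⊕ V)).card := Finset.card_le_univ s
        _ ≤ (s.biUnion t').card := Finset.card_le_card fun y _ =>
            Finset.mem_biUnion.mpr ⟨x, hxs, by rw [ht'x]; exact Finset.mem_univ y⟩
  obtain ⟨f, hfinj, hf⟩ := (Finset.all_card_le_biUnion_card_iff_exists_injective t').mp hall
  -- extract the matchings
  set φ : V → V := fun a => Sum.elim id id (f (Sum.inl a)) with hφdef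
  have hφ : ∀ a ∈ A, f (Sum.inl a) = Sum.inr (φ a) ∧ φ a ∈ B ∧ G.Adj a (φ a) := by
    intro a ha
    have := hf (Sum.inl a)
    rw [ht'] at this
    simp only [Sum.elim_inl, if_pos ha] at this
    obtain ⟨b, hb, hfb⟩ := Finset.mem_image.mp this
    obtain ⟨hbB, hadj⟩ := Finset.mem_filter.mp hb
    have hφa : φ a = b := by rw [hφdef]; simp [← hfb]
    rw [hφa]
    exact ⟨hfb.symm, hbB, hadj⟩
  set ψ : V → V := fun a => Sum.elim id id (f (Sum.inr (φ a))) with hψdef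
  have hψ : ∀ a ∈ A, f (Sum.inr (φ a)) = Sum.inl (ψ a) ∧ ψ a ∈ C ∧ G.Adj (φ a) (ψ a) := by
    intro a ha
    obtain ⟨hfa, hφB, _⟩ := hφ a ha
    have := hf (Sum.inr (φ a))
    rw [ht'] at this
    simp only [Sum.elim_inr, if_pos hφB] at this
    rcases Finset.mem_insert.mp this with heq | hmem
    · exfalso
      have : Sum.inl a = Sum.inr (φ a) := hfinj (hfa.trans heq.symm)
      exact Sum.inl_ne_inr this
    · obtain ⟨c, hc, hfc⟩ := Finset.mem_image.mp hmem
      obtain ⟨hcC, hadj⟩ := Finset.mem_filter.mp hc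
      have hψa : ψ a = c := by rw [hψdef]; simp [← hfc]
      rw [hψa]
      exact ⟨hfc.symm, hcC, hadj⟩
  have hφinj : ∀ a ∈ A, ∀ a' ∈ A, φ a = φ a' → a = a' := by
    intro a ha a' ha' heq
    have h1 := (hφ a ha).1
    have h2 := (hφ a' ha').1
    have : f (Sum.inl a) = f (Sum.inl a') := by rw [h1, h2, heq]
    exact Sum.inl_injective (hfinj this)
  have hψinj : ∀ a ∈ A, ∀ a' ∈ A, ψ a = ψ a' → a = a' := by
    intro a ha a' ha' heq
    have h1 := (hψ a ha).1
    have h2 := (hψ a' ha').1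
    have : f (Sum.inr (φ a)) = f (Sum.inr (φ a')) := by rw [h1, h2, heq]
    exact hφinj a ha a' ha' (Sum.inr_injective (hfinj this))
  -- enumerate A
  set σ : Fin m ≃ {x // x ∈ A} := (A.equivFinOfCardEq hA).symm with hσ
  have hσA : ∀ i, (σ i : V) ∈ A := fun i => (σ i).2
  have hσinj : ∀ i j : Fin m, (σ i : V) = (σ j : V) → i = j := by
    intro i j h
    exact σ.injective (Subtype.ext h)
  refine ⟨fun i => (σ i : V), fun i => ψ (σ i : V),
    fun i => Walk.cons (hφ _ (hσA i)).2.2 (Walk.cons (hψ _ (hσA i)).2.2 Walk.nil),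
    hσA, fun i => (hψ _ (hσA i)).2.1, ?_, ?_, ?_⟩
  · intro i
    set a := (σ i : V)
    have ha := hσA i
    have hφa := (hφ a ha).2.1
    have hψa := (hψ a ha).2.1
    have h1 : a ≠ φ a := (hφ a ha).2.2.ne
    have h2 : φ a ≠ ψ a := (hψ a ha).2.2.ne
    have h3 : a ≠ ψ a := by
      intro h
      exact (Finset.disjoint_left.mp hAC ha) (show a ∈ C by rw [h]; exact hψa)
    simp [Walk.isPath_def, h1, h2, h3]
    exact ⟨⟨h1, h3⟩, h2⟩
  · intro i v hv
    set a := (σ i : V)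
    have ha := hσA i
    simp only [Walk.support_cons, Walk.support_nil, List.mem_cons, List.mem_singleton] at hv
    rcases hv with rfl | rfl | rfl | h
    · exact Finset.mem_union_left _ (Finset.mem_union_left _ ha)
    · exact Finset.mem_union_left _ (Finset.mem_union_right _ (hφ a ha).2.1)
    · exact Finset.mem_union_right _ (hψ a ha).2.1
    · exact absurd h List.not_mem_nil
  · intro i j hij v hvi hvj
    set a := (σ i : V)
    set a' := (σ j : V)
    have ha := hσA i
    have ha' := hσA j
    have haa' : a ≠ a' := fun h => hij (hσinj i j h)
    have hφB := (hφ a ha).2.1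
    have hφB' := (hφ a' ha').2.1
    have hψC := (hψ a ha).2.1
    have hψC' := (hψ a' ha').2.1
    simp only [Walk.support_cons, Walk.support_nil, List.mem_cons,
      List.mem_singleton, List.not_mem_nil, or_false] at hvi hvj
    have dAB := Finset.disjoint_left.mp hAB
    have dAC := Finset.disjoint_left.mp hAC
    have dBC := Finset.disjoint_left.mp hBC
    rcases hvi with rfl | rfl | rfl <;> rcases hvj with h | h | h
    · exact haa' h
    · exact dAB ha (by rw [h]; exact hφB')
    · exact dAC ha (by rw [h]; exact hψC')
    · exact dAB ha' (by rw [← h]; exact hφB)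
    · exact hij (hσinj i j (hφinj a ha a' ha' h))
    · exact dBC hφB (by rw [h]; exact hψC')
    · exact dAC ha' (by rw [← h]; exact hψC)
    · exact dBC hφB' (by rw [← h]; exact hψC)
    · exact hij (hσinj i j (hψinj a ha a' ha' h))
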